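/- Let F, G ⊆ [ℕ]^{<∞} be regular families. Then the family (F, G) = { F ∪ G : F ∈ F, G ∈ G, F < G } is regular. -/

import Mathlib

open Filter

/-- The characteristic function of a finite set, as an element of the Cantor
space `2^ℕ = ℕ → Bool`. -/
def charFun (A : Finset ℕ) : ℕ → Bool := fun n => decide (n ∈ A)

/-- A family of finite subsets of `ℕ` is hereditary if it is closed under subsets. -/
def IsHereditaryFam (F : Set (Finset ℕ)) : Prop :=
  ∀ A ∈ F, ∀ B ⊆ A, B ∈ F

/-- A family is spreading if it is closed under moving elements to the right. -/
def IsSpreadingFam (F : Set (Finset ℕ)) : Prop :=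
  ∀ A ∈ F, ∀ φ : ℕ → ℕ,
    (∀ a ∈ A, ∀ b ∈ A, a < b → φ a < φ b) → (∀ a ∈ A, a ≤ φ a) →
      A.image φ ∈ F

/-- A family is compact if it is compact (equivalently, closed) as a subset of
`2^ℕ` with the product topology. -/
def IsCompactFam (F : Set (Finset ℕ)) : Prop := IsClosed (charFun '' F)

/-- A regular family: hereditary, spreading and compact. -/
def IsRegularFam (F : Set (Finset ℕ)) : Prop :=
  IsHereditaryFam F ∧ IsSpreadingFam F ∧ IsCompactFam F

/-- `famComp F G = F[G] = { G_1 ∪ ⋯ ∪ G_k : G_i ∈ G, G_1 < ⋯ < G_k,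
(min G_i)_{i=1}^k ∈ F }`. -/
def famComp (F G : Set (Finset ℕ)) : Set (Finset ℕ) :=
  {H | ∃ (k : ℕ) (Gs : Fin k → Finset ℕ) (mins : Fin k → ℕ),
    (∀ i, Gs i ∈ G) ∧
    (∀ i, mins i ∈ Gs i) ∧
    (∀ i, ∀ a ∈ Gs i, mins i ≤ a) ∧
    (∀ i j : Fin k, i < j → ∀ a ∈ Gs i, ∀ b ∈ Gs j, a < b) ∧
    Finset.image mins Finset.univ ∈ F ∧
    H = Finset.univ.biUnion Gs}

/-- The first Schreier family `S_1 = { A : |A| ≤ min A }` (on positive integers: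
note `0 ∈ A` is impossible for nonempty members). -/
def SchreierOne : Set (Finset ℕ) := {A | ∀ n ∈ A, A.card ≤ n}

/-- The Schreier families `S_n`: `S_0` consists of singletons (of positive
integers) and `∅`, and `S_{n+1} = S_1[S_n]`. -/
def Schreier : ℕ → Set (Finset ℕ)
  | 0 => {A | A.card ≤ 1 ∧ 0 ∉ A}
  | n + 1 => famComp SchreierOne (Schreier n)

/-- If `F` and `G` are regular families then so is
`(F, G) = { A ∪ B : A ∈ F, B ∈ G, A < B }`. -/
lemma mem_closure_charFun' {S : Set (ℕ → Bool)} {f : ℕ → Bool}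
    (h : ∀ N, ∃ g ∈ S, ∀ m < N, g m = f m) : f ∈ closure S := by
  choose g hg hag using h
  refine mem_closure_of_tendsto (show Tendsto g atTop (nhds f) from ?_)
    (Eventually.of_forall hg)
  rw [tendsto_pi_nhds]
  intro m
  rw [nhds_discrete, tendsto_pure]
  filter_upwards [eventually_ge_atTop (m + 1)] with N hN
  exact hag N m (by omega)

lemma approx_of_mem_closure' {S : Set (ℕ → Bool)} {f : ℕ → Bool}
    (h : f ∈ closure S) (N : ℕ) : ∃ g ∈ S, ∀ m < N, g m = f m := by
  have hU : {g : ℕ → Bool | ∀ m < N, g m = f m} ∈ nhds f := by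
    have he : {g : ℕ → Bool | ∀ m < N, g m = f m}
        = ⋂ m ∈ Finset.range N, (fun g : ℕ → Bool => g m) ⁻¹' {f m} := by
      ext g; simp [Finset.mem_range]
    rw [he]
    refine (Filter.biInter_finset_mem _).2 fun m _ => ?_
    exact IsOpen.mem_nhds ((isOpen_discrete {f m}).preimage (continuous_apply m)) rfl
  obtain ⟨g, hg1, hg2⟩ := mem_closure_iff_nhds.1 h _ hU
  exact ⟨g, hg2, hg1⟩

lemma support_charFun_finite (A : Finset ℕ) : {m | charFun A m = true}.Finite := by
  refine Set.Finite.subset A.finite_toSet ?_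
  intro m hm
  simpa [charFun] using hm

theorem isRegular_famPair (F G : Set (Finset ℕ))
    (hF : IsRegularFam F) (hG : IsRegularFam G) :
    IsRegularFam {H | ∃ A B : Finset ℕ, A ∈ F ∧ B ∈ G ∧
      (∀ a ∈ A, ∀ b ∈ B, a < b) ∧ H = A ∪ B} := by
  obtain ⟨hFher, hFspr, hFcl⟩ := hF
  obtain ⟨hGher, hGspr, hGcl⟩ := hG
  set P : Set (Finset ℕ) := {H | ∃ A B : Finset ℕ, A ∈ F ∧ B ∈ G ∧
      (∀ a ∈ A, ∀ b ∈ B, a < b) ∧ H = A ∪ B} with hPdef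
  have hher : IsHereditaryFam P := by
    rintro H ⟨A, B, hA, hB, hAB, rfl⟩ C hC
    refine ⟨C ∩ A, C ∩ B, hFher A hA _ Finset.inter_subset_right,
      hGher B hB _ Finset.inter_subset_right, ?_, ?_⟩
    · intro a ha b hb
      exact hAB a (Finset.mem_of_mem_inter_right ha) b (Finset.mem_of_mem_inter_right hb)
    · rw [← Finset.inter_union_distrib_left, Finset.inter_eq_left.2 hC]
  have hspr : IsSpreadingFam P := by
    rintro H ⟨A, B, hA, hB, hAB, rfl⟩ φ hmono hle
    refine ⟨A.image φ, B.image φ, ?_, ?_, ?_, ?_⟩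
    · exact hFspr A hA φ
        (fun a ha b hb hab => hmono a (Finset.mem_union_left _ ha) b (Finset.mem_union_left _ hb) hab)
        (fun a ha => hle a (Finset.mem_union_left _ ha))
    · exact hGspr B hB φ
        (fun a ha b hb hab => hmono a (Finset.mem_union_right _ ha) b (Finset.mem_union_right _ hb) hab)
        (fun a ha => hle a (Finset.mem_union_right _ ha))
    · intro x hx y hy
      obtain ⟨a, ha, rfl⟩ := Finset.mem_image.1 hx
      obtain ⟨b, hb, rfl⟩ := Finset.mem_image.1 hy
      exact hmono a (Finset.mem_union_left _ ha) b (Finset.mem_union_right _ hb) (hAB a ha b hb)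
    · simp [Finset.image_union]
  refine ⟨hher, hspr, ?_⟩
  rw [IsCompactFam]
  apply isClosed_of_closure_subset
  rintro f hf
  have happ : ∀ N, ∃ H ∈ P, ∀ m < N, charFun H m = f m := by
    intro N
    obtain ⟨g, ⟨H, hH, rfl⟩, hag⟩ := approx_of_mem_closure' hf N
    exact ⟨H, hH, hag⟩
  set T : ℕ → Finset ℕ := fun n => (Finset.range (n + 1)).filter (fun m => f m = true)
    with hTdef
  have hTmem : ∀ n m, m ∈ T n ↔ (m < n + 1 ∧ f m = true) := by
    intro n m; simp [hTdef, Finset.mem_filter, Finset.mem_range]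
  have hQ : ∀ n, ∃ c, (T n ∩ Finset.range c ∈ F ∧ T n \ Finset.range c ∈ G) := by
    intro n
    obtain ⟨H, ⟨A, B, hA, hB, hAB, rfl⟩, hag⟩ := happ (n + 1)
    have hTn : ∀ m, m ∈ T n → m ∈ A ∪ B := by
      intro m hm
      rw [hTmem] at hm
      have := hag m hm.1
      simp only [charFun, hm.2] at this
      exact of_decide_eq_true this
    by_cases hBe : B.Nonempty
    · refine ⟨B.min' hBe, hFher A hA _ ?_, hGher B hB _ ?_⟩
      · intro x hx
        obtain ⟨hx1, hx2⟩ := Finset.mem_inter.1 hx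
        have hxc := Finset.mem_range.1 hx2
        rcases Finset.mem_union.1 (hTn x hx1) with h | h
        · exact h
        · exact absurd (B.min'_le x h) (by omega)
      · intro x hx
        obtain ⟨hx1, hx2⟩ := Finset.mem_sdiff.1 hx
        have hxc : ¬ x < B.min' hBe := fun h => hx2 (Finset.mem_range.2 h)
        rcases Finset.mem_union.1 (hTn x hx1) with h | h
        · exact absurd (hAB x h _ (B.min'_mem hBe)) hxc
        · exact h
    · refine ⟨n + 1, hFher A hA _ ?_, ?_⟩
      · intro x hx
        obtain ⟨hx1, _⟩ := Finset.mem_inter.1 hx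
        rcases Finset.mem_union.1 (hTn x hx1) with h | h
        · exact h
        · exact absurd ⟨x, h⟩ hBe
      · have hempty : T n \ Finset.range (n + 1) = ∅ := by
          ext x
          simp only [Finset.mem_sdiff, Finset.mem_range, hTmem, Finset.notMem_empty, iff_false]
          rintro ⟨⟨h1, _⟩, h2⟩
          exact h2 h1
        rw [hempty]
        exact hGher B hB ∅ (Finset.empty_subset B)
  by_cases hfin : {m | f m = true}.Finite
  · -- finite support
    obtain ⟨M, hM⟩ : ∃ M, ∀ m, f m = true → m < M := by
      obtain ⟨b, hb⟩ := hfin.bddAbove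
      exact ⟨b + 1, fun m hm => Nat.lt_succ_of_le (hb hm)⟩
    obtain ⟨H, hHP, hag⟩ := happ M
    have hfeq : f = charFun (H ∩ Finset.range M) := by
      funext m
      by_cases hm : m < M
      · have h1 := hag m hm
        simp only [charFun, Finset.mem_inter, Finset.mem_range] at h1 ⊢
        rw [← h1]
        simp [hm]
      · have h1 : f m = false := by
          cases hfm : f m
          · rfl
          · exact absurd (hM m hfm) hm
        simp [charFun, Finset.mem_inter, Finset.mem_range, hm, h1]
    rw [hfeq]
    exact ⟨_, hher H hHP _ Finset.inter_subset_left, rfl⟩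
  · exfalso
    choose c hc1 hc2 using hQ
    by_cases hcase : ∃ c0, {n | c n = c0}.Infinite
    · obtain ⟨c0, hc0⟩ := hcase
      set g : ℕ → Bool := fun m => f m && decide (c0 ≤ m) with hgdef
      have hgmem : g ∈ charFun '' G := by
        refine hGcl.closure_subset (mem_closure_charFun' fun N => ?_)
        obtain ⟨n, hn1, hn2⟩ := hc0.exists_gt N
        have hcn : c n = c0 := hn1
        refine ⟨charFun (T n \ Finset.range (c n)), ⟨_, hc2 n, rfl⟩, fun m hm => ?_⟩
        have hm' : m < n + 1 := by omega
        simp only [charFun, Finset.mem_sdiff, Finset.mem_range, hTmem, hgdef, hcn]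
        cases hfm : f m <;> simp [hfm, hm', not_lt]
      obtain ⟨B, _, hBg⟩ := hgmem
      have hgfin : {m | g m = true}.Finite := hBg ▸ support_charFun_finite B
      apply hfin
      refine Set.Finite.subset (hgfin.union (Set.finite_Iio c0)) ?_
      intro m hm
      by_cases hmc : m < c0
      · exact Or.inr hmc
      · exact Or.inl (by simp [hgdef, hm.out, not_lt.1 hmc])
    · push_neg at hcase
      apply hfin
      have hfF : f ∈ charFun '' F := by
        refine hFcl.closure_subset (mem_closure_charFun' fun N => ?_)
        have hBad : {n | c n < N}.Finite := by
          have : {n | c n < N} ⊆ ⋃ c0 ∈ Finset.range N, {n | c n = c0} := by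
            intro n hn
            simp only [Set.mem_iUnion]
            exact ⟨c n, Finset.mem_range.2 hn, rfl⟩
          refine Set.Finite.subset ?_ this
          exact Set.Finite.biUnion (Finset.range N).finite_toSet fun c0 _ =>
            (hcase c0)
        obtain ⟨n, hn⟩ := (Set.Finite.union hBad (Set.finite_Iio N)).infinite_compl.nonempty
        simp only [Set.mem_compl_iff, Set.mem_union, Set.mem_setOf_eq, Set.mem_Iio,
          not_or, not_lt] at hn
        obtain ⟨hn1, hn2⟩ := hn
        refine ⟨charFun (T n ∩ Finset.range (c n)), ⟨_, hc1 n, rfl⟩, fun m hm => ?_⟩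
        have hm1 : m < n + 1 := by omega
        have hm2 : m < c n := by omega
        simp only [charFun, Finset.mem_inter, Finset.mem_range, hTmem]
        cases hfm : f m <;> simp [hfm, hm1, hm2]
      obtain ⟨A, _, hAf⟩ := hfF
      exact hAf ▸ support_charFun_finite A
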